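/- If a pair (s, J) of a string and a plaquette count is not balanced, then ∫ dU W_s(U) ∏_{p} Tr(U_p)^{J(p)} = 0, where the integral is over independent Haar-distributed unitary matrices on the positively oriented edges of the lattice. -/

import Mathlib

open MeasureTheory Finset

/-- Borel product measurable structure on matrices. -/
noncomputable instance matrixMeasurableSpace (N : ℕ) : MeasurableSpace (Matrix (Fin N) (Fin N) ℂ) :=
  show MeasurableSpace (Fin N → Fin N → ℂ) from inferInstance

/-- The group element traversed by a loop: oriented edges are pairs (e, b) of
a positive lattice edge e and an orientation b, with U_{(e,true)} = U_e and
U_{(e,false)} = U_e⁻¹; the loop variable is the ordered product. -/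
noncomputable def loopVar {N : ℕ} {Epos : Type*}
    (U : Epos → Matrix.unitaryGroup (Fin N) ℂ) (ℓ : List (Epos × Bool)) :
    Matrix.unitaryGroup (Fin N) ℂ :=
  (ℓ.map (fun eb => if eb.2 then U eb.1 else (U eb.1)⁻¹)).prod

/-- Wilson loop observable W_ℓ(U) = (1/N) Tr(U_ℓ). -/
noncomputable def Wloop {N : ℕ} {Epos : Type*}
    (U : Epos → Matrix.unitaryGroup (Fin N) ℂ) (ℓ : List (Epos × Bool)) : ℂ :=
  Matrix.trace ((loopVar U ℓ : Matrix.unitaryGroup (Fin N) ℂ) :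
    Matrix (Fin N) (Fin N) ℂ) / (N : ℂ)

/-- Wilson string observable: the product of the Wilson loop observables over
the loops of the string. -/
noncomputable def Wstring {N : ℕ} {Epos : Type*}
    (U : Epos → Matrix.unitaryGroup (Fin N) ℂ) (s : List (List (Epos × Bool))) : ℂ :=
  (s.map (Wloop U)).prod

/-- Occurrences of the oriented edge eb among the loops of s. -/
def occCount {Epos : Type*} [DecidableEq Epos] (s : List (List (Epos × Bool)))
    (eb : Epos × Bool) : ℕ :=
  (s.map (fun ℓ => ℓ.count eb)).sum

/-- (s, J) is balanced: every oriented edge occurs (in s together with J(p)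
copies of each plaquette boundary) as often as its reversal. -/
def BalancedPair {Epos Pl : Type*} [DecidableEq Epos] [Fintype Pl]
    (bd : Pl → List (Epos × Bool)) (s : List (List (Epos × Bool)))
    (J : Pl → ℕ) : Prop :=
  ∀ eb : Epos × Bool,
    occCount s eb + ∑ p, J p * (bd p).count eb
      = occCount s (eb.1, !eb.2) + ∑ p, J p * (bd p).count (eb.1, !eb.2)

/- ### Auxiliary lemmas -/

lemma wilson_meas_mul_left {N : ℕ} (c : Matrix.unitaryGroup (Fin N) ℂ) :
    Measurable fun x : Matrix.unitaryGroup (Fin N) ℂ => c * x := by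
  apply Measurable.subtype_mk
  show Measurable fun x : Matrix.unitaryGroup (Fin N) ℂ =>
    ((c : Matrix (Fin N) (Fin N) ℂ) * x)
  apply measurable_pi_lambda; intro i
  apply measurable_pi_lambda; intro j
  show Measurable fun x : Matrix.unitaryGroup (Fin N) ℂ =>
    ∑ k, (c : Matrix (Fin N) (Fin N) ℂ) i k * (x : Matrix (Fin N) (Fin N) ℂ) k j
  apply Finset.measurable_sum; intro k _
  apply Measurable.const_mul
  exact ((measurable_pi_apply j).comp ((measurable_pi_apply k).comp measurable_subtype_coe))

lemma wilson_meas_mul_right {N : ℕ} (c : Matrix.unitaryGroup (Fin N) ℂ) :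
    Measurable fun x : Matrix.unitaryGroup (Fin N) ℂ => x * c := by
  apply Measurable.subtype_mk
  show Measurable fun x : Matrix.unitaryGroup (Fin N) ℂ =>
    ((x : Matrix (Fin N) (Fin N) ℂ) * c)
  apply measurable_pi_lambda; intro i
  apply measurable_pi_lambda; intro j
  show Measurable fun x : Matrix.unitaryGroup (Fin N) ℂ =>
    ∑ k, (x : Matrix (Fin N) (Fin N) ℂ) i k * (c : Matrix (Fin N) (Fin N) ℂ) k j
  apply Finset.measurable_sum; intro k _
  apply Measurable.mul_const
  exact ((measurable_pi_apply k).comp ((measurable_pi_apply i).comp measurable_subtype_coe))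

instance (N : ℕ) : MeasurableMul (Matrix.unitaryGroup (Fin N) ℂ) :=
  ⟨wilson_meas_mul_left, wilson_meas_mul_right⟩

lemma scalar_mem_unitary {N : ℕ} (z : ℂ) (hz : z * (starRingEnd ℂ) z = 1) :
    (z • (1 : Matrix (Fin N) (Fin N) ℂ)) ∈ Matrix.unitaryGroup (Fin N) ℂ := by
  rw [Matrix.mem_unitaryGroup_iff]
  have h : star (z • (1 : Matrix (Fin N) (Fin N) ℂ)) = (starRingEnd ℂ) z • 1 := by
    rw [star_smul, star_one]; rfl
  rw [h, smul_mul_smul_comm, one_mul, hz, one_smul]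

lemma coe_inv_unitary {N : ℕ} (u : Matrix.unitaryGroup (Fin N) ℂ) :
    ((u⁻¹ : Matrix.unitaryGroup (Fin N) ℂ) : Matrix (Fin N) (Fin N) ℂ)
      = star (u : Matrix (Fin N) (Fin N) ℂ) := by
  rw [← Unitary.star_eq_inv]; rfl

lemma edge_scale {N : ℕ} {Epos : Type*} [DecidableEq Epos]
    (z w : ℂ) (hw : w = (starRingEnd ℂ) z) (e₀ : Epos)
    (g U : Epos → Matrix.unitaryGroup (Fin N) ℂ)
    (hg0 : ((g e₀ : Matrix (Fin N) (Fin N) ℂ)) = z • 1)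
    (hg1 : ∀ e, e ≠ e₀ → g e = 1)
    (eb : Epos × Bool) :
    (((if eb.2 then (g * U) eb.1 else ((g * U) eb.1)⁻¹) :
        Matrix.unitaryGroup (Fin N) ℂ) : Matrix (Fin N) (Fin N) ℂ)
      = (if eb.1 = e₀ then (if eb.2 then z else w) else 1) •
        (((if eb.2 then U eb.1 else (U eb.1)⁻¹) :
          Matrix.unitaryGroup (Fin N) ℂ) : Matrix (Fin N) (Fin N) ℂ) := by
  obtain ⟨e, b⟩ := eb
  dsimp only
  have hmul : (((g * U) e : Matrix.unitaryGroup (Fin N) ℂ) :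
      Matrix (Fin N) (Fin N) ℂ)
      = ((g e : Matrix.unitaryGroup (Fin N) ℂ) : Matrix (Fin N) (Fin N) ℂ) *
        ((U e : Matrix.unitaryGroup (Fin N) ℂ) : Matrix (Fin N) (Fin N) ℂ) := by
    rw [Pi.mul_apply]; rfl
  by_cases he : e = e₀
  · subst he
    have hscal : (((g * U) e : Matrix.unitaryGroup (Fin N) ℂ) :
        Matrix (Fin N) (Fin N) ℂ)
        = z • ((U e : Matrix.unitaryGroup (Fin N) ℂ) :
            Matrix (Fin N) (Fin N) ℂ) := by
      rw [hmul, hg0, smul_mul_assoc, one_mul]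
    cases b
    · simp only [if_pos rfl, Bool.false_eq_true, if_false]
      rw [coe_inv_unitary, coe_inv_unitary, hscal, star_smul, hw]
      rfl
    · simp only [if_pos rfl, if_true]
      exact hscal
  · have h1 : (g * U) e = U e := by rw [Pi.mul_apply, hg1 e he, one_mul]
    rw [if_neg he, h1, one_smul]

lemma loop_scale {N : ℕ} {Epos : Type*} [DecidableEq Epos]
    (z w : ℂ) (hw : w = (starRingEnd ℂ) z) (e₀ : Epos)
    (g U : Epos → Matrix.unitaryGroup (Fin N) ℂ)
    (hg0 : ((g e₀ : Matrix (Fin N) (Fin N) ℂ)) = z • 1)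
    (hg1 : ∀ e, e ≠ e₀ → g e = 1)
    (ℓ : List (Epos × Bool)) :
    ((loopVar (g * U) ℓ : Matrix.unitaryGroup (Fin N) ℂ) :
        Matrix (Fin N) (Fin N) ℂ)
      = (z ^ ℓ.count (e₀, true) * w ^ ℓ.count (e₀, false)) •
        ((loopVar U ℓ : Matrix.unitaryGroup (Fin N) ℂ) :
          Matrix (Fin N) (Fin N) ℂ) := by
  induction ℓ with
  | nil => simp [loopVar]
  | cons eb ℓ ih =>
    have hmulU : ∀ (V : Epos → Matrix.unitaryGroup (Fin N) ℂ),
        ((loopVar V (eb :: ℓ) : Matrix.unitaryGroup (Fin N) ℂ) :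
          Matrix (Fin N) (Fin N) ℂ)
        = (((if eb.2 then V eb.1 else (V eb.1)⁻¹) :
            Matrix.unitaryGroup (Fin N) ℂ) : Matrix (Fin N) (Fin N) ℂ) *
          ((loopVar V ℓ : Matrix.unitaryGroup (Fin N) ℂ) :
            Matrix (Fin N) (Fin N) ℂ) := by
      intro V
      rw [loopVar, loopVar, List.map_cons, List.prod_cons, Submonoid.coe_mul]
    rw [hmulU (g * U), hmulU U,
      edge_scale z w hw e₀ g U hg0 hg1 eb, ih,
      smul_mul_assoc, mul_smul_comm, smul_smul]
    congr 1
    obtain ⟨e, b⟩ := eb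
    by_cases he : e = e₀
    · subst he
      cases b
      · simp [List.count_cons, pow_succ, Prod.ext_iff]
        ring
      · simp [List.count_cons, pow_succ, Prod.ext_iff]
        ring
    · simp [List.count_cons, Prod.ext_iff, he, Ne.symm he]

lemma trace_loop_scale {N : ℕ} {Epos : Type*} [DecidableEq Epos]
    (z w : ℂ) (hw : w = (starRingEnd ℂ) z) (e₀ : Epos)
    (g U : Epos → Matrix.unitaryGroup (Fin N) ℂ)
    (hg0 : ((g e₀ : Matrix (Fin N) (Fin N) ℂ)) = z • 1)
    (hg1 : ∀ e, e ≠ e₀ → g e = 1)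
    (ℓ : List (Epos × Bool)) :
    Matrix.trace ((loopVar (g * U) ℓ : Matrix.unitaryGroup (Fin N) ℂ) :
        Matrix (Fin N) (Fin N) ℂ)
      = (z ^ ℓ.count (e₀, true) * w ^ ℓ.count (e₀, false)) *
        Matrix.trace ((loopVar U ℓ : Matrix.unitaryGroup (Fin N) ℂ) :
          Matrix (Fin N) (Fin N) ℂ) := by
  rw [loop_scale z w hw e₀ g U hg0 hg1 ℓ, Matrix.trace_smul, smul_eq_mul]

lemma string_scale {N : ℕ} {Epos : Type*} [DecidableEq Epos]
    (z w : ℂ) (hw : w = (starRingEnd ℂ) z) (e₀ : Epos)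
    (g U : Epos → Matrix.unitaryGroup (Fin N) ℂ)
    (hg0 : ((g e₀ : Matrix (Fin N) (Fin N) ℂ)) = z • 1)
    (hg1 : ∀ e, e ≠ e₀ → g e = 1)
    (s : List (List (Epos × Bool))) :
    Wstring (g * U) s
      = (z ^ occCount s (e₀, true) * w ^ occCount s (e₀, false)) * Wstring U s := by
  induction s with
  | nil => simp [Wstring, occCount]
  | cons ℓ s ih =>
    have hW : Wloop (g * U) ℓ
        = (z ^ ℓ.count (e₀, true) * w ^ ℓ.count (e₀, false)) * Wloop U ℓ := by
      rw [Wloop, Wloop, trace_loop_scale z w hw e₀ g U hg0 hg1 ℓ, mul_div_assoc]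
    have hcons : ∀ V : Epos → Matrix.unitaryGroup (Fin N) ℂ,
        Wstring V (ℓ :: s) = Wloop V ℓ * Wstring V s := by
      intro V; rw [Wstring, Wstring, List.map_cons, List.prod_cons]
    have hocc : ∀ eb : Epos × Bool,
        occCount (ℓ :: s) eb = ℓ.count eb + occCount s eb := by
      intro eb; rw [occCount, occCount, List.map_cons, List.sum_cons]
    rw [hcons (g * U), hcons U, hW, ih, hocc, hocc, pow_add, pow_add]
    ring

/-- If (s, J) is not balanced, then the integral over independent Haar
unitaries of W_s(U) ∏_p Tr(U_p)^{J(p)} vanishes. -/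
theorem stmt_15 {N : ℕ} {Epos Pl : Type*} [DecidableEq Epos] [Fintype Pl]
    (μ : Measure (Epos → Matrix.unitaryGroup (Fin N) ℂ))
    [μ.IsHaarMeasure] [IsProbabilityMeasure μ]
    (bd : Pl → List (Epos × Bool)) (s : List (List (Epos × Bool))) (J : Pl → ℕ)
    (hnb : ¬ BalancedPair bd s J) :
    ∫ U, Wstring U s *
        ∏ p, (Matrix.trace ((loopVar U (bd p) : Matrix.unitaryGroup (Fin N) ℂ) :
          Matrix (Fin N) (Fin N) ℂ)) ^ (J p) ∂μ = 0 := by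
  classical
  rw [BalancedPair] at hnb
  push_neg at hnb
  obtain ⟨eb, heb⟩ := hnb
  set e₀ := eb.1 with he₀
  set a : ℕ := occCount s (e₀, true) + ∑ p, J p * (bd p).count (e₀, true) with ha
  set b : ℕ := occCount s (e₀, false) + ∑ p, J p * (bd p).count (e₀, false) with hb
  have hab : a ≠ b := by
    rcases eb with ⟨e, bo⟩
    cases bo
    · exact fun h => heb h.symm
    · exact heb
  set m : ℕ := a + b + 1 with hm
  have hmC : ((m : ℂ)) ≠ 0 := Nat.cast_ne_zero.mpr (by omega)
  set x : ℂ := (2 * Real.pi * Complex.I) / m with hx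
  have hconj : (starRingEnd ℂ) x = -x := by
    rw [hx, map_div₀]
    simp [map_mul, Complex.conj_I, Complex.conj_ofReal, Complex.conj_natCast, map_ofNat, neg_div]
  set z : ℂ := Complex.exp x with hzdef
  set w : ℂ := (starRingEnd ℂ) z with hwdef
  have hwexp : w = Complex.exp (-x) := by
    rw [hwdef, hzdef, ← Complex.exp_conj, hconj]
  have hz1 : z * (starRingEnd ℂ) z = 1 := by
    rw [← hwdef, hwexp, hzdef, ← Complex.exp_add, add_neg_cancel, Complex.exp_zero]
  -- the scalar
  set c : ℂ := z ^ a * w ^ b with hc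
  have hcexp : c = Complex.exp (((a : ℂ) - b) * x) := by
    rw [hc, hzdef, hwexp, ← Complex.exp_nat_mul, ← Complex.exp_nat_mul,
      ← Complex.exp_add]
    congr 1
    ring
  have h2πI : (2 * (Real.pi : ℂ) * Complex.I) ≠ 0 := by
    simp [Real.pi_ne_zero, Complex.I_ne_zero, Complex.ofReal_ne_zero]
  have hc1 : c ≠ 1 := by
    intro hone
    rw [hcexp, Complex.exp_eq_one_iff] at hone
    obtain ⟨n, hn⟩ := hone
    have hmx : (m : ℂ) * x = 2 * Real.pi * Complex.I := by
      rw [hx]; field_simp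
    have key : (((a : ℂ) - b) - n * m) * (2 * (Real.pi : ℂ) * Complex.I) = 0 := by
      linear_combination (m : ℂ) * hn - ((a : ℂ) - b) * hmx
    have h2 : ((a : ℂ) - b) = n * m := by
      rcases mul_eq_zero.mp key with h | h
      · exact sub_eq_zero.mp h
      · exact absurd h h2πI
    have h3 : (a : ℤ) - b = n * m := by exact_mod_cast h2
    have hm3 : (m : ℤ) = (a : ℤ) + b + 1 := by rw [hm]; push_cast; ring
    rcases lt_trichotomy n 0 with hn0 | hn0 | hn0
    · have : n ≤ -1 := by omega
      nlinarith [h3, hm3, (Nat.cast_nonneg a : (0:ℤ) ≤ a), (Nat.cast_nonneg b : (0:ℤ) ≤ b),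
        mul_le_mul_of_nonneg_right this (show (0:ℤ) ≤ m by positivity)]
    · subst hn0
      simp only [Int.cast_zero, zero_mul] at h3
      exact hab (by omega)
    · have : 1 ≤ n := by omega
      nlinarith [h3, hm3, (Nat.cast_nonneg a : (0:ℤ) ≤ a), (Nat.cast_nonneg b : (0:ℤ) ≤ b),
        mul_le_mul_of_nonneg_right this (show (0:ℤ) ≤ m by positivity)]
  -- the group element
  set zU : Matrix.unitaryGroup (Fin N) ℂ :=
    ⟨z • (1 : Matrix (Fin N) (Fin N) ℂ), scalar_mem_unitary z hz1⟩ with hzU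
  set g : Epos → Matrix.unitaryGroup (Fin N) ℂ :=
    fun e => if e = e₀ then zU else 1 with hg
  have hg0 : ((g e₀ : Matrix.unitaryGroup (Fin N) ℂ) :
      Matrix (Fin N) (Fin N) ℂ) = z • 1 := by
    rw [hg]; simp [hzU]
  have hg1 : ∀ e, e ≠ e₀ → g e = 1 := by
    intro e he; rw [hg]; simp [he]
  -- the integrand and its transformation
  set F : (Epos → Matrix.unitaryGroup (Fin N) ℂ) → ℂ := fun U =>
    Wstring U s *
      ∏ p, (Matrix.trace ((loopVar U (bd p) : Matrix.unitaryGroup (Fin N) ℂ) :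
        Matrix (Fin N) (Fin N) ℂ)) ^ (J p) with hF
  have hscale : ∀ U, F (g * U) = c * F U := by
    intro U
    rw [hF]
    dsimp only
    rw [string_scale z w rfl e₀ g U hg0 hg1 s]
    have hP : (∏ p, (Matrix.trace
          ((loopVar (g * U) (bd p) : Matrix.unitaryGroup (Fin N) ℂ) :
            Matrix (Fin N) (Fin N) ℂ)) ^ (J p))
        = (z ^ (∑ p, J p * (bd p).count (e₀, true)) *
            w ^ (∑ p, J p * (bd p).count (e₀, false))) *
          ∏ p, (Matrix.trace ((loopVar U (bd p) : Matrix.unitaryGroup (Fin N) ℂ) :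
            Matrix (Fin N) (Fin N) ℂ)) ^ (J p) := by
      rw [← Finset.prod_pow_eq_pow_sum, ← Finset.prod_pow_eq_pow_sum,
        ← Finset.prod_mul_distrib, ← Finset.prod_mul_distrib]
      apply Finset.prod_congr rfl
      intro p _
      rw [trace_loop_scale z w rfl e₀ g U hg0 hg1 (bd p)]
      rw [mul_pow, mul_pow, ← pow_mul, ← pow_mul, mul_comm ((bd p).count (e₀, true)),
        mul_comm ((bd p).count (e₀, false))]
    rw [hP, hc, ha, hb, pow_add, pow_add]
    ring
  -- Haar invariance
  have hinv : ∫ U, F U ∂μ = ∫ U, F (g * U) ∂μ :=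
    (integral_mul_left_eq_self F g).symm
  have h1 : ∫ U, F (g * U) ∂μ = ∫ U, c * F U ∂μ := by
    apply integral_congr_ae
    filter_upwards with U using hscale U
  have h2 : ∫ U, c * F U ∂μ = c * ∫ U, F U ∂μ := by
    simp_rw [← smul_eq_mul]
    exact integral_smul c F
  have : ∫ U, F U ∂μ = c * ∫ U, F U ∂μ := hinv.trans (h1.trans h2)
  have hzero : (c - 1) * ∫ U, F U ∂μ = 0 := by
    rw [sub_mul, one_mul, ← this, sub_self]
  rcases mul_eq_zero.mp hzero with h | h
  · exact absurd (sub_eq_zero.mp h) hc1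
  · exact h
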